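/- Let (X,d) be a pseudometric space of even finite cardinality, (T,d_T) a metric tree, f : X → T a 1-Lipschitz map with m(X, f*d_T) = m(X,d), and π a minimal matching of (X, f*d_T). Then for any two distinct pairs {x,y} and {x',y'} in π, the arcs [f(x),f(y)] and [f(x'),f(y')] in T have at most one common point; consequently, the 1-dimensional Hausdorff measure of A_π := ⋃_{{x,y}∈π} [f(x),f(y)] equals m(X,d). -/

import Mathlib

open MeasureTheory

/-- A matching on `X`: a partition of `X` into two-element subsets,
encoded as a fixed-point-free involution. -/
def IsMatching {X : Type*} (π : X → X) : Prop :=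
  Function.Involutive π ∧ ∀ x, π x ≠ x

/-- The matching number of a matching `π` with respect to `d`:
`∑_{{x,y} ∈ π} d(x,y)` (each pair is counted twice in the sum, whence the division). -/
noncomputable def matchVal {X : Type*} [Fintype X] (d : X → X → ℝ) (π : X → X) : ℝ :=
  (∑ x, d x (π x)) / 2

/-- The matching number `m(X,d)`: the minimum of `m(π,d)` over all matchings `π` on `X`. -/
noncomputable def matchNum {X : Type*} [Fintype X] (d : X → X → ℝ) : ℝ :=
  sInf {r | ∃ π : X → X, IsMatching π ∧ r = matchVal d π}

/-- `d` is a pseudometric on `X`. -/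
def IsPseudometric {X : Type*} (d : X → X → ℝ) : Prop :=
  (∀ x, d x x = 0) ∧ (∀ x y, d x y = d y x) ∧ ∀ x y z, d x z ≤ d x y + d y z

/-- A metric space is geodesic if any two points `x`, `y` are joined by an isometric
embedding of the interval `[0, dist x y]`. -/
def IsGeodesicSpace (T : Type*) [MetricSpace T] : Prop :=
  ∀ x y : T, ∃ γ : ℝ → T, γ 0 = x ∧ γ (dist x y) = y ∧
    ∀ s ∈ Set.Icc (0 : ℝ) (dist x y), ∀ t ∈ Set.Icc (0 : ℝ) (dist x y),
      dist (γ s) (γ t) = |s - t|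

/-- The four-point (tree-likeness) condition for a metric space. -/
def FourPointCond (T : Type*) [MetricSpace T] : Prop :=
  ∀ x₁ x₂ x₃ x₄ : T, dist x₁ x₃ + dist x₂ x₄ ≤
    max (dist x₁ x₂ + dist x₃ x₄) (dist x₁ x₄ + dist x₂ x₃)

/-- A metric tree: a complete geodesic metric space satisfying the four-point condition. -/
def IsMetricTree (T : Type*) [MetricSpace T] : Prop :=
  CompleteSpace T ∧ IsGeodesicSpace T ∧ FourPointCond T

/-- The arc `[a,b]` between two points of a metric tree. -/
def arcT {T : Type*} [MetricSpace T] (a b : T) : Set T :=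
  {z | dist a z + dist z b = dist a b}

section Aux

variable {T : Type*} [MetricSpace T]

lemma mem_arcT_iff {a b z : T} : z ∈ arcT a b ↔ dist a z + dist z b = dist a b :=
  Iff.rfl

lemma arcT_subset (a b : T) : arcT a b ⊆ arcT b a := by
  intro z hz
  have h : dist a z + dist z b = dist a b := hz
  show dist b z + dist z a = dist b a
  rw [dist_comm b z, dist_comm z a, dist_comm b a]
  linarith

lemma arcT_comm (a b : T) : arcT a b = arcT b a :=
  subset_antisymm (arcT_subset a b) (arcT_subset b a)

/-- Parametrization of arcs in a metric tree. -/
lemma arc_param (hG : IsGeodesicSpace T) (hF : FourPointCond T) (a b : T) :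
    ∃ γ : ℝ → T, γ 0 = a ∧ γ (dist a b) = b ∧
      (∀ s ∈ Set.Icc (0:ℝ) (dist a b), ∀ t ∈ Set.Icc (0:ℝ) (dist a b),
        dist (γ s) (γ t) = |s - t|) ∧
      arcT a b = γ '' Set.Icc 0 (dist a b) ∧
      ∀ z ∈ arcT a b, z = γ (dist a z) := by
  obtain ⟨γ, h0, hL, hiso⟩ := hG a b
  have hLmem : dist a b ∈ Set.Icc (0:ℝ) (dist a b) := ⟨dist_nonneg, le_rfl⟩
  have h0mem : (0:ℝ) ∈ Set.Icc (0:ℝ) (dist a b) := ⟨le_rfl, dist_nonneg⟩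
  have key : ∀ z ∈ arcT a b, z = γ (dist a z) := by
    intro z hz
    have hz' : dist a z + dist z b = dist a b := hz
    have hmem : dist a z ∈ Set.Icc (0:ℝ) (dist a b) :=
      ⟨dist_nonneg, by linarith [dist_nonneg (x := z) (y := b)]⟩
    have h1 : dist (γ (dist a z)) b = dist a b - dist a z := by
      have := hiso _ hmem _ hLmem
      rw [hL] at this
      rw [this, abs_of_nonpos (by linarith [hmem.2])]
      ring
    have h2 : dist a (γ (dist a z)) = dist a z := by
      have := hiso _ h0mem _ hmem
      rw [h0] at this
      rw [this, abs_of_nonpos (by linarith [hmem.1])]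
      ring
    have h4 := hF z a (γ (dist a z)) b
    rw [dist_comm z a] at h4
    have hmax : max (dist a z + dist (γ (dist a z)) b) (dist z b + dist a (γ (dist a z)))
        = dist a b := by
      rw [h1, h2]
      have : dist z b = dist a b - dist a z := by linarith
      rw [this, show dist a z + (dist a b - dist a z) = dist a b by ring,
        show dist a b - dist a z + dist a z = dist a b by ring, max_self]
    rw [hmax] at h4
    have : dist z (γ (dist a z)) ≤ 0 := by linarith
    exact (dist_le_zero.mp this)
  refine ⟨γ, h0, hL, hiso, ?_, key⟩
  apply subset_antisymm
  · intro z hz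
    have hz' : dist a z + dist z b = dist a b := hz
    exact ⟨dist a z, ⟨dist_nonneg, by linarith [dist_nonneg (x := z) (y := b)]⟩, (key z hz).symm⟩
  · rintro _ ⟨t, ht, rfl⟩
    have h1 : dist a (γ t) = t := by
      have := hiso _ h0mem _ ht
      rw [h0] at this
      rw [this, abs_of_nonpos (by linarith [ht.1])]
      ring
    have h2 : dist (γ t) b = dist a b - t := by
      have := hiso _ ht _ hLmem
      rw [hL] at this
      rw [this, abs_of_nonpos (by linarith [ht.2])]
      ring
    show dist a (γ t) + dist (γ t) b = dist a b
    rw [h1, h2]; ring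

lemma dist_of_mem_arcT (hG : IsGeodesicSpace T) (hF : FourPointCond T) {a b z w : T}
    (hz : z ∈ arcT a b) (hw : w ∈ arcT a b) :
    dist z w = |dist a z - dist a w| := by
  obtain ⟨γ, h0, hL, hiso, himg, hkey⟩ := arc_param hG hF a b
  have hz' : dist a z + dist z b = dist a b := hz
  have hw' : dist a w + dist w b = dist a b := hw
  have hzmem : dist a z ∈ Set.Icc (0:ℝ) (dist a b) :=
    ⟨dist_nonneg, by linarith [dist_nonneg (x := z) (y := b)]⟩
  have hwmem : dist a w ∈ Set.Icc (0:ℝ) (dist a b) :=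
    ⟨dist_nonneg, by linarith [dist_nonneg (x := w) (y := b)]⟩
  calc dist z w = dist (γ (dist a z)) (γ (dist a w)) := by
        rw [← hkey z hz, ← hkey w hw]
    _ = |dist a z - dist a w| := hiso _ hzmem _ hwmem

lemma arc_measure [MeasurableSpace T] [BorelSpace T]
    (hG : IsGeodesicSpace T) (hF : FourPointCond T) (a b : T) :
    μH[1] (arcT a b) = ENNReal.ofReal (dist a b) := by
  obtain ⟨γ, h0, hL, hiso, himg, hkey⟩ := arc_param hG hF a b
  set L := dist a b with hLdef
  have hg : Isometry (fun t : Set.Icc (0:ℝ) L => γ (t : ℝ)) := by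
    apply Isometry.of_dist_eq
    intro s t
    rw [Subtype.dist_eq, Real.dist_eq]
    exact hiso _ s.2 _ t.2
  have himg2 : (fun t : Set.Icc (0:ℝ) L => γ (t : ℝ)) '' Set.univ = γ '' Set.Icc 0 L := by
    rw [Set.image_univ]
    have : (fun t : Set.Icc (0:ℝ) L => γ (t : ℝ)) = γ ∘ (Subtype.val) := rfl
    rw [this, Set.range_comp, Subtype.range_coe]
  have hval : Isometry (Subtype.val : Set.Icc (0:ℝ) L → ℝ) := isometry_subtype_coe
  have h1 : μH[1] (Set.univ : Set (Set.Icc (0:ℝ) L)) = ENNReal.ofReal L := by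
    have := hval.hausdorffMeasure_image (Or.inl zero_le_one) Set.univ
    rw [Set.image_univ, Subtype.range_coe] at this
    rw [← this, MeasureTheory.hausdorffMeasure_real, Real.volume_Icc, sub_zero]
  calc μH[1] (arcT a b) = μH[1] ((fun t : Set.Icc (0:ℝ) L => γ (t : ℝ)) '' Set.univ) := by
        rw [himg2, himg]
    _ = μH[1] (Set.univ : Set (Set.Icc (0:ℝ) L)) :=
        hg.hausdorffMeasure_image (Or.inl zero_le_one) Set.univ
    _ = ENNReal.ofReal L := h1

lemma singleton_null [MeasurableSpace T] [BorelSpace T]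
    (hG : IsGeodesicSpace T) (hF : FourPointCond T) (p : T) :
    μH[1] ({p} : Set T) = 0 := by
  have h1 : ({p} : Set T) ⊆ arcT p p := by
    intro z hz
    rw [Set.mem_singleton_iff] at hz
    rw [hz]
    show dist p p + dist p p = dist p p
    simp
  have h2 : μH[1] (arcT p p) = 0 := by
    rw [arc_measure hG hF p p, dist_self, ENNReal.ofReal_zero]
  exact measure_mono_null h1 h2

lemma subsingleton_null [MeasurableSpace T] [BorelSpace T]
    (hG : IsGeodesicSpace T) (hF : FourPointCond T) {s : Set T}
    (hs : Set.Subsingleton s) : μH[1] s = 0 := by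
  rcases hs.eq_empty_or_singleton with h | ⟨p, h⟩
  · rw [h]; exact measure_empty
  · rw [h]; exact singleton_null hG hF p

lemma matchVal_nonneg {X : Type*} [Fintype X] {T : Type*} [MetricSpace T] (f : X → T)
    (σ : X → X) : 0 ≤ matchVal (fun x y => dist (f x) (f y)) σ := by
  unfold matchVal
  apply div_nonneg _ (by norm_num)
  exact Finset.sum_nonneg fun _ _ => dist_nonneg

/-- Core contradiction: if two arcs of a minimal matching share two distinct points
(compatibly ordered), we can improve the matching. -/
lemma core_contradiction {X : Type*} [Fintype X] {T : Type*} [MetricSpace T]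
    (hG : IsGeodesicSpace T) (hF : FourPointCond T)
    (f : X → T) (π : X → X) (hπ : IsMatching π)
    (hπmin : matchVal (fun x y => dist (f x) (f y)) π =
      matchNum (fun x y => dist (f x) (f y)))
    (x x' : X) (hne1 : x' ≠ x) (hne2 : x' ≠ π x)
    (z w : T) (hz1 : z ∈ arcT (f x) (f (π x))) (hz2 : z ∈ arcT (f x') (f (π x')))
    (hw1 : w ∈ arcT (f x) (f (π x))) (hw2 : w ∈ arcT (f x') (f (π x')))
    (h1 : dist (f x) z ≤ dist (f x) w) (h2 : dist (f x') z ≤ dist (f x') w)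
    (hzw : z ≠ w) : False := by
  classical
  set ρ : X → X → ℝ := fun u v => dist (f u) (f v) with hρ
  have hd1 : π x ≠ x := hπ.2 x
  have hd2 : π x' ≠ x' := hπ.2 x'
  have hd3 : π x' ≠ x := by
    intro h
    apply hne2
    have := congrArg π h
    rwa [hπ.1 x'] at this
  have hd4 : π x' ≠ π x := fun h => hne1 (hπ.1.injective h)
  -- basic distance relations
  have ez1 : dist (f x) z + dist z (f (π x)) = dist (f x) (f (π x)) := hz1
  have ez2 : dist (f x') z + dist z (f (π x')) = dist (f x') (f (π x')) := hz2
  have ew1 : dist (f x) w + dist w (f (π x)) = dist (f x) (f (π x)) := hw1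
  have ew2 : dist (f x') w + dist w (f (π x')) = dist (f x') (f (π x')) := hw2
  have hδ : 0 < dist z w := dist_pos.mpr hzw
  have eA : dist (f x) w = dist (f x) z + dist z w := by
    have := dist_of_mem_arcT hG hF hz1 hw1
    rw [abs_of_nonpos (by linarith)] at this
    linarith
  have eB : dist (f x') w = dist (f x') z + dist z w := by
    have := dist_of_mem_arcT hG hF hz2 hw2
    rw [abs_of_nonpos (by linarith)] at this
    linarith
  -- the improved matching
  set π' : X → X := fun u =>
    if u = x then x' else if u = x' then x
    else if u = π x then π x' else if u = π x' then π x else π u with hπ'def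
  have vx : π' x = x' := by simp [hπ'def]
  have vx' : π' x' = x := by simp [hπ'def, hne1]
  have vpx : π' (π x) = π x' := by simp [hπ'def, hd1, Ne.symm hne2]
  have vpx' : π' (π x') = π x := by simp [hπ'def, hd3, hd2, hd4]
  have vgen : ∀ u, u ≠ x → u ≠ x' → u ≠ π x → u ≠ π x' → π' u = π u := by
    intro u a b c d; simp [hπ'def, a, b, c, d]
  have hπ'match : IsMatching π' := by
    constructor
    · intro u
      by_cases hu1 : u = x
      · subst hu1; rw [vx, vx']
      by_cases hu2 : u = x'
      · subst hu2; rw [vx', vx]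
      by_cases hu3 : u = π x
      · subst hu3; rw [vpx, vpx']
      by_cases hu4 : u = π x'
      · subst hu4; rw [vpx', vpx]
      · rw [vgen u hu1 hu2 hu3 hu4]
        have p1 : π u ≠ x := fun h => hu3 (by rw [← h, hπ.1])
        have p2 : π u ≠ x' := fun h => hu4 (by rw [← h, hπ.1])
        have p3 : π u ≠ π x := fun h => hu1 (hπ.1.injective h)
        have p4 : π u ≠ π x' := fun h => hu2 (hπ.1.injective h)
        rw [vgen _ p1 p2 p3 p4, hπ.1]
    · intro u
      by_cases hu1 : u = x
      · subst hu1; rw [vx]; exact hne1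
      by_cases hu2 : u = x'
      · subst hu2; rw [vx']; exact Ne.symm hne1
      by_cases hu3 : u = π x
      · subst hu3; rw [vpx]; exact hd4
      by_cases hu4 : u = π x'
      · subst hu4; rw [vpx']; exact Ne.symm hd4
      · rw [vgen u hu1 hu2 hu3 hu4]; exact hπ.2 u
  -- sum comparison
  set g : X → ℝ := fun u => ρ u (π' u) with hg
  set h : X → ℝ := fun u => ρ u (π u) with hh
  have hsum : ∑ u, g u ≤ (∑ u, h u) - 4 * dist z w := by
    have hsub : ∑ u, (g u - h u) = ∑ u ∈ ({x, x', π x, π x'} : Finset X), (g u - h u) := by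
      symm
      apply Finset.sum_subset (Finset.subset_univ _)
      intro u _ hu
      simp only [Finset.mem_insert, Finset.mem_singleton, not_or] at hu
      obtain ⟨a, b, c, d⟩ := hu
      simp [hg, hh, vgen u a b c d]
    have hcard : ∑ u ∈ ({x, x', π x, π x'} : Finset X), (g u - h u)
        = (g x - h x) + (g x' - h x') + (g (π x) - h (π x)) + (g (π x') - h (π x')) := by
      rw [Finset.sum_insert (by simp [Ne.symm hne1, Ne.symm hd1, Ne.symm hd3]),
          Finset.sum_insert (by simp [hne2, Ne.symm hd2]),
          Finset.sum_insert (by simp [Ne.symm hd4]), Finset.sum_singleton]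
      ring
    have hval : (g x - h x) + (g x' - h x') + (g (π x) - h (π x)) + (g (π x') - h (π x'))
        ≤ -(4 * dist z w) := by
      simp only [hg, hh, hρ, vx, vx', vpx, vpx']
      have t1 : dist (f x) (f x') ≤ dist (f x) z + dist (f x') z := by
        have := dist_triangle (f x) z (f x')
        rw [dist_comm z (f x')] at this; linarith
      have t2 : dist (f (π x)) (f (π x')) ≤ dist w (f (π x)) + dist w (f (π x')) := by
        have := dist_triangle (f (π x)) w (f (π x'))
        rw [dist_comm (f (π x)) w] at this; linarith
      have c1 : dist (f x') (f x) = dist (f x) (f x') := dist_comm _ _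
      have c2 : dist (f (π x')) (f (π x)) = dist (f (π x)) (f (π x')) := dist_comm _ _
      have c4 : dist (f (π x)) (f x) = dist (f x) (f (π x)) := dist_comm _ _
      have c5 : dist (f (π x')) (f x') = dist (f x') (f (π x')) := dist_comm _ _
      rw [hπ.1 x, hπ.1 x', c1, c2, c4, c5]
      linarith
    have htot : ∑ u, (g u - h u) ≤ -(4 * dist z w) := by
      rw [hsub, hcard]; exact hval
    rw [Finset.sum_sub_distrib] at htot
    linarith
  have hlt : matchVal ρ π' < matchVal ρ π := by
    unfold matchVal
    have : (∑ u, g u) / 2 ≤ ((∑ u, h u) - 4 * dist z w) / 2 := by linarith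
    calc (∑ u, ρ u (π' u)) / 2 = (∑ u, g u) / 2 := rfl
      _ ≤ ((∑ u, h u) - 4 * dist z w) / 2 := this
      _ < (∑ u, h u) / 2 := by linarith
      _ = (∑ u, ρ u (π u)) / 2 := rfl
  have hle : matchNum ρ ≤ matchVal ρ π' := by
    apply csInf_le
    · refine ⟨0, ?_⟩
      rintro r ⟨σ, hσ, rfl⟩
      exact matchVal_nonneg f σ
    · exact ⟨π', hπ'match, rfl⟩
  rw [hπmin] at hlt
  exact absurd (hle.trans_lt hlt) (lt_irrefl _)

end Aux

/-- Let `f : X → T` be `1`-Lipschitz into a metric tree with `m(X, f*d_T) = m(X,d)` and let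
`π` be a minimal matching of `(X, f*d_T)`.  Then the arcs `[f x, f (π x)]` corresponding to
distinct pairs of `π` meet in at most one point, and the `1`-dimensional Hausdorff measure
of `A_π = ⋃_{{x,y} ∈ π} [f x, f y]` equals `m(X,d)`. -/
theorem stmt9 {X : Type*} [Fintype X] (hX : Even (Fintype.card X))
    (d : X → X → ℝ) (hd : IsPseudometric d)
    (T : Type*) [MetricSpace T] [MeasurableSpace T] [BorelSpace T] (hT : IsMetricTree T)
    (f : X → T) (hf : ∀ x y, dist (f x) (f y) ≤ d x y)
    (hm : matchNum (fun x y => dist (f x) (f y)) = matchNum d)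
    (π : X → X) (hπ : IsMatching π)
    (hπmin : matchVal (fun x y => dist (f x) (f y)) π =
      matchNum (fun x y => dist (f x) (f y))) :
    (∀ x x' : X, x' ≠ x → x' ≠ π x →
      Set.Subsingleton (arcT (f x) (f (π x)) ∩ arcT (f x') (f (π x')))) ∧
    μH[1] (⋃ x : X, arcT (f x) (f (π x))) = ENNReal.ofReal (matchNum d) := by
  classical
  obtain ⟨_, hG, hF⟩ := hT
  have part1 : ∀ x x' : X, x' ≠ x → x' ≠ π x →
      Set.Subsingleton (arcT (f x) (f (π x)) ∩ arcT (f x') (f (π x'))) := by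
    intro x x' hne1 hne2 z hz w hw
    by_contra hzw
    obtain ⟨hz1, hz2⟩ := hz
    obtain ⟨hw1, hw2⟩ := hw
    -- memberships in the arc with endpoints swapped for x'
    have hd3 : π x' ≠ x := by
      intro h
      apply hne2
      have := congrArg π h
      rw [hπ.1 x'] at this
      exact this
    have hd4 : π x' ≠ π x := fun h => hne1 (hπ.1.injective h)
    have hz2' : z ∈ arcT (f (π x')) (f (π (π x'))) := by
      rw [hπ.1 x', arcT_comm]; exact hz2
    have hw2' : w ∈ arcT (f (π x')) (f (π (π x'))) := by
      rw [hπ.1 x', arcT_comm]; exact hw2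
    have ez2 : dist (f x') z + dist z (f (π x')) = dist (f x') (f (π x')) := hz2
    have ew2 : dist (f x') w + dist w (f (π x')) = dist (f x') (f (π x')) := hw2
    rcases le_total (dist (f x) z) (dist (f x) w) with hcase1 | hcase1
    · rcases le_total (dist (f x') z) (dist (f x') w) with hcase2 | hcase2
      · exact core_contradiction hG hF f π hπ hπmin x x' hne1 hne2 z w
          hz1 hz2 hw1 hw2 hcase1 hcase2 hzw
      · have h2' : dist (f (π x')) z ≤ dist (f (π x')) w := by
          rw [dist_comm (f (π x')) z, dist_comm (f (π x')) w]; linarith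
        exact core_contradiction hG hF f π hπ hπmin x (π x') hd3 hd4 z w
          hz1 hz2' hw1 hw2' hcase1 h2' hzw
    · rcases le_total (dist (f x') w) (dist (f x') z) with hcase2 | hcase2
      · exact core_contradiction hG hF f π hπ hπmin x x' hne1 hne2 w z
          hw1 hw2 hz1 hz2 hcase1 hcase2 (Ne.symm hzw)
      · have h2' : dist (f (π x')) w ≤ dist (f (π x')) z := by
          rw [dist_comm (f (π x')) z, dist_comm (f (π x')) w]; linarith
        exact core_contradiction hG hF f π hπ hπmin x (π x') hd3 hd4 w z
          hw1 hw2' hz1 hz2' hcase1 h2' (Ne.symm hzw)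
  refine ⟨part1, ?_⟩
  -- Part 2: the measure computation
  set e := Fintype.equivFin X with he
  set R : Finset X := Finset.univ.filter (fun u => (e u : ℕ) < (e (π u) : ℕ)) with hR
  have hRmem : ∀ u, u ∈ R ↔ (e u : ℕ) < (e (π u) : ℕ) := by
    intro u; simp [hR]
  have hneval : ∀ u, (e u : ℕ) ≠ (e (π u) : ℕ) := by
    intro u hcontra
    exact hπ.2 u (e.injective (Fin.val_injective hcontra)).symm
  have hSwap : ∀ u, π u ∈ R ↔ ¬ (u ∈ R) := by
    intro u
    rw [hRmem, hRmem, hπ.1 u]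
    constructor
    · intro h1 h2; omega
    · intro h1; have := hneval u; omega
  -- the union over all of X equals the union over representatives R
  have hUnion : (⋃ x : X, arcT (f x) (f (π x))) = ⋃ u ∈ R, arcT (f u) (f (π u)) := by
    apply subset_antisymm
    · intro p hp
      simp only [Set.mem_iUnion] at hp ⊢
      obtain ⟨u, hu⟩ := hp
      by_cases h : u ∈ R
      · exact ⟨u, h, hu⟩
      · refine ⟨π u, (hSwap u).mpr h, ?_⟩
        rw [hπ.1 u, arcT_comm]
        exact hu
    · intro p hp
      simp only [Set.mem_iUnion] at hp ⊢
      obtain ⟨u, _, hu⟩ := hp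
      exact ⟨u, hu⟩
  have harc_closed : ∀ u : X, IsClosed (arcT (f u) (f (π u))) := by
    intro u
    have : arcT (f u) (f (π u)) =
        {p | dist (f u) p + dist p (f (π u)) = dist (f u) (f (π u))} := rfl
    rw [this]
    exact isClosed_eq (by fun_prop) continuous_const
  have hpair : (↑R : Set X).Pairwise (Function.onFun (MeasureTheory.AEDisjoint μH[1])
      fun u => arcT (f u) (f (π u))) := by
    intro u hu v hv huv
    have hu' : u ∈ R := hu
    have hv' : v ∈ R := hv
    have hvne : v ≠ π u := by
      intro h
      have h1 := (hRmem u).mp hu'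
      have h2 := (hRmem v).mp hv'
      rw [h] at h2
      rw [hπ.1 u] at h2
      omega
    have := part1 u v (Ne.symm huv) hvne
    exact subsingleton_null hG hF this
  have hmeas : ∀ u ∈ R, NullMeasurableSet (arcT (f u) (f (π u))) μH[1] :=
    fun u _ => ((harc_closed u).measurableSet).nullMeasurableSet
  have hadd : μH[1] (⋃ u ∈ R, arcT (f u) (f (π u)))
      = ∑ u ∈ R, μH[1] (arcT (f u) (f (π u))) :=
    measure_biUnion_finset₀ hpair hmeas
  have harcval : ∀ u : X, μH[1] (arcT (f u) (f (π u)))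
      = ENNReal.ofReal (dist (f u) (f (π u))) := fun u => arc_measure hG hF _ _
  have hsumval : ∑ u ∈ R, μH[1] (arcT (f u) (f (π u)))
      = ENNReal.ofReal (∑ u ∈ R, dist (f u) (f (π u))) := by
    rw [ENNReal.ofReal_sum_of_nonneg (fun _ _ => dist_nonneg)]
    exact Finset.sum_congr rfl fun u _ => harcval u
  -- the sum over R is half the full sum
  have hhalf : ∑ u, dist (f u) (f (π u)) = 2 * ∑ u ∈ R, dist (f u) (f (π u)) := by
    have hsplit := Finset.sum_filter_add_sum_filter_not Finset.univ
      (fun u => (e u : ℕ) < (e (π u) : ℕ)) (fun u => dist (f u) (f (π u)))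
    have hbij : ∑ u ∈ Finset.univ.filter (fun u => ¬ (e u : ℕ) < (e (π u) : ℕ)),
        dist (f u) (f (π u)) = ∑ u ∈ R, dist (f u) (f (π u)) := by
      apply Finset.sum_nbij' π π
      · intro a ha
        simp only [Finset.mem_filter, Finset.mem_univ, true_and] at ha
        rw [hRmem, hπ.1 a]
        have := hneval a; omega
      · intro a ha
        have := (hRmem a).mp ha
        simp only [Finset.mem_filter, Finset.mem_univ, true_and]
        rw [hπ.1 a]
        omega
      · intro a _; exact hπ.1 a
      · intro a _; exact hπ.1 a
      · intro a _
        rw [hπ.1 a, dist_comm]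
    rw [← hsplit, hbij]
    have : Finset.univ.filter (fun u => (e u : ℕ) < (e (π u) : ℕ)) = R := rfl
    rw [this]
    ring
  have hmv : matchVal (fun x y => dist (f x) (f y)) π = ∑ u ∈ R, dist (f u) (f (π u)) := by
    unfold matchVal
    rw [hhalf]
    ring
  rw [hUnion, hadd, hsumval, ← hmv, hπmin, hm]
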